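/- Let X ⊂ ℝ^{2n} be a strictly convex body with smooth boundary in standard symplectic space, and for z ∈ ∂X let the characteristic direction be JN_z where N_z is the outer unit normal and J the standard complex structure. Then through any boundary point A ∈ ∂X there is at most one 4-periodic symplectic billiard trajectory, i.e., at most one quadruple (A,B,C,D) of boundary points such that the characteristic lines at A and C are both parallel to BD, and the characteristic lines at B and D are both parallel to AC. -/

import Mathlib

open scoped RealInnerProductSpace

/-- The standard complex structure `J` on `ℝ^{2n}`:
`J eᵢ = e_{i+n}` for `i < n` and `J eᵢ = -e_{i-n}` for `i ≥ n`. -/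
def Jstd (n : ℕ) (v : EuclideanSpace ℝ (Fin (2 * n))) : EuclideanSpace ℝ (Fin (2 * n)) :=
  WithLp.toLp 2 fun (i : Fin (2 * n)) =>
    if h : (i : ℕ) < n then v ⟨(i : ℕ) + n, by omega⟩
    else -v ⟨(i : ℕ) - n, by have := i.isLt; omega⟩

/-- A 4-periodic symplectic billiard trajectory for a body `X` with outer unit normal
field `ν`: four pairwise distinct boundary points `A B C D` such that the characteristic
lines `J ν` at `A` and `C` are parallel to `BD`, and those at `B` and `D` are parallel
to `AC`. -/
def IsSymplecticTraj4 (n : ℕ) (X : Set (EuclideanSpace ℝ (Fin (2 * n))))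
    (ν : EuclideanSpace ℝ (Fin (2 * n)) → EuclideanSpace ℝ (Fin (2 * n)))
    (A B C D : EuclideanSpace ℝ (Fin (2 * n))) : Prop :=
  A ∈ frontier X ∧ B ∈ frontier X ∧ C ∈ frontier X ∧ D ∈ frontier X ∧
    A ≠ B ∧ A ≠ C ∧ A ≠ D ∧ B ≠ C ∧ B ≠ D ∧ C ≠ D ∧
    (∃ t : ℝ, t ≠ 0 ∧ D - B = t • Jstd n (ν A)) ∧
    (∃ t : ℝ, t ≠ 0 ∧ D - B = t • Jstd n (ν C)) ∧
    (∃ t : ℝ, t ≠ 0 ∧ C - A = t • Jstd n (ν B)) ∧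
    (∃ t : ℝ, t ≠ 0 ∧ C - A = t • Jstd n (ν D))


lemma Jstd_smul (n : ℕ) (r : ℝ) (v : EuclideanSpace ℝ (Fin (2 * n))) :
    Jstd n (r • v) = r • Jstd n v := by
  ext i
  simp only [Jstd, PiLp.smul_apply, PiLp.toLp_apply, smul_eq_mul]
  split <;> ring

lemma Jstd_Jstd (n : ℕ) (v : EuclideanSpace ℝ (Fin (2 * n))) :
    Jstd n (Jstd n v) = -v := by
  ext i
  rcases i with ⟨i, hi⟩
  simp only [Jstd, PiLp.neg_apply, PiLp.toLp_apply]
  by_cases h : i < n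
  · rw [dif_pos h, dif_neg (by omega : ¬ i + n < n)]
    congr 1
    exact congrArg (fun j => v j) (Fin.ext (by show i + n - n = i; omega))
  · rw [dif_neg h, dif_pos (by omega : i - n < n)]
    congr 1
    exact congrArg (fun j => v j) (Fin.ext (by show i - n + n = i; omega))

lemma Jstd_cancel (n : ℕ) (v w : EuclideanSpace ℝ (Fin (2 * n))) (t s : ℝ) (hs : s ≠ 0)
    (hts : t • Jstd n v = s • Jstd n w) : w = (t / s) • v := by
  have h2 : Jstd n w = (t / s) • Jstd n v := by
    have h1 := congrArg (fun x => s⁻¹ • x) hts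
    simp only [smul_smul] at h1
    rw [inv_mul_cancel₀ hs, one_smul] at h1
    rw [← h1, div_eq_inv_mul]
  have h3 := congrArg (Jstd n) h2
  rw [Jstd_Jstd, ← Jstd_smul, Jstd_Jstd] at h3
  exact neg_injective h3

/-- Through any boundary point `A` of a strictly convex smooth body in standard
symplectic `ℝ^{2n}` there is at most one 4-periodic symplectic billiard trajectory. -/
theorem symplectic_billiard_four_periodic_unique
    (n : ℕ) (hn : 1 ≤ n) (X : Set (EuclideanSpace ℝ (Fin (2 * n))))
    (hXconv : Convex ℝ X) (hXcomp : IsCompact X) (hXint : (interior X).Nonempty)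
    (hXstrict : ∀ p ∈ frontier X, ∀ q ∈ frontier X, p ≠ q →
      openSegment ℝ p q ⊆ interior X)
    (ν : EuclideanSpace ℝ (Fin (2 * n)) → EuclideanSpace ℝ (Fin (2 * n)))
    (hν : ∀ z ∈ frontier X, ‖ν z‖ = 1 ∧ ∀ y ∈ X, ⟪y - z, ν z⟫ ≤ 0)
    (A B C D B' C' D' : EuclideanSpace ℝ (Fin (2 * n)))
    (h : IsSymplecticTraj4 n X ν A B C D) (h' : IsSymplecticTraj4 n X ν A B' C' D') :
    C = C' ∧ ((B = B' ∧ D = D') ∨ (B = D' ∧ D = B')) := by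
  have hfr : frontier X ⊆ X :=
    hXcomp.isClosed.frontier_subset
  -- interior points are strictly inside every supporting halfspace
  have key1 : ∀ y ∈ interior X, ∀ p ∈ frontier X, ⟪y - p, ν p⟫ < 0 := by
    intro y hy p hp
    obtain ⟨ε, hε, hball⟩ := Metric.mem_nhds_iff.mp (mem_interior_iff_mem_nhds.mp hy)
    have hz : y + (ε / 2) • ν p ∈ X := by
      apply hball
      rw [Metric.mem_ball, dist_eq_norm]
      have e : y + (ε / 2) • ν p - y = (ε / 2) • ν p := by abel
      rw [e, norm_smul, (hν p hp).1, mul_one, Real.norm_eq_abs,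
        abs_of_pos (by linarith : (0:ℝ) < ε / 2)]
      linarith
    have hle := (hν p hp).2 _ hz
    have hexp : y + (ε / 2) • ν p - p = (y - p) + (ε / 2) • ν p := by abel
    rw [hexp, inner_add_left, real_inner_smul_left, real_inner_self_eq_norm_sq,
      (hν p hp).1] at hle
    nlinarith
  -- the boundary point with a given outer normal is unique
  have key2 : ∀ p ∈ frontier X, ∀ q ∈ frontier X, ν p = ν q → p = q := by
    intro p hp q hq hpq
    by_contra hne
    have hM : (1/2 : ℝ) • p + (1/2 : ℝ) • q ∈ interior X :=
      hXstrict p hp q hq hne ⟨1/2, 1/2, by norm_num, by norm_num, by norm_num, rfl⟩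
    have h1 := key1 _ hM p hp
    have h2 : ⟪q - p, ν p⟫ ≤ 0 := (hν p hp).2 q (hfr hq)
    have h3 : ⟪p - q, ν p⟫ ≤ 0 := by rw [hpq]; exact (hν q hq).2 p (hfr hp)
    have h4 : ⟪p - q, ν p⟫ = -⟪q - p, ν p⟫ := by
      rw [← inner_neg_left]; congr 1; abel
    have h5 : (1/2 : ℝ) • p + (1/2 : ℝ) • q - p = (1/2 : ℝ) • (q - p) := by
      rw [smul_sub]; module
    rw [h5, real_inner_smul_left] at h1
    linarith
  -- normals are unit vectors, so proportionality constants are ±1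
  have key3 : ∀ p ∈ frontier X, ∀ q ∈ frontier X, ∀ c : ℝ,
      ν q = c • ν p → c = 1 ∨ c = -1 := by
    intro p hp q hq c hc
    have h1 : ‖ν q‖ = |c| * ‖ν p‖ := by
      rw [hc, norm_smul, Real.norm_eq_abs]
    rw [(hν p hp).1, (hν q hq).1, mul_one] at h1
    exact (abs_eq (by norm_num : (0:ℝ) ≤ 1)).mp (by linarith)
  -- characteristic directions parallel forces opposite normals at distinct points
  have hstep : ∀ p ∈ frontier X, ∀ q ∈ frontier X,
      ∀ (a : EuclideanSpace ℝ (Fin (2 * n))) (t s : ℝ), t ≠ 0 → s ≠ 0 →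
      a = t • Jstd n (ν p) → a = s • Jstd n (ν q) → p ≠ q → ν q = -ν p := by
    intro p hp q hq a t s ht hs ha1 ha2 hpq
    have h2 : ν q = (t / s) • ν p := Jstd_cancel n (ν p) (ν q) t s hs (ha1 ▸ ha2)
    rcases key3 p hp q hq (t / s) h2 with h3 | h3
    · exact absurd (key2 q hq p hp (by rw [h2, h3, one_smul])).symm hpq
    · rw [h2, h3, neg_one_smul]
  obtain ⟨hA, hB, hC, hD, hAB, hAC, hAD, hBC, hBD, hCD,
    ⟨t1, ht1, e1⟩, ⟨t2, ht2, e2⟩, ⟨s1, hs1, e3⟩, ⟨s2, hs2, e4⟩⟩ := h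
  obtain ⟨-, hB', hC', hD', hAB', hAC', hAD', hBC', hBD', hCD',
    ⟨t1', ht1', e1'⟩, ⟨t2', ht2', e2'⟩, ⟨s1', hs1', e3'⟩, ⟨s2', hs2', e4'⟩⟩ := h'
  have hνC : ν C = -ν A := hstep A hA C hC _ t1 t2 ht1 ht2 e1 e2 hAC
  have hνC' : ν C' = -ν A := hstep A hA C' hC' _ t1' t2' ht1' ht2' e1' e2' hAC'
  have hCC' : C = C' := key2 C hC C' hC' (hνC.trans hνC'.symm)
  refine ⟨hCC', ?_⟩
  rw [← hCC'] at e3' e4'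
  have hνD : ν D = -ν B := hstep B hB D hD _ s1 s2 hs1 hs2 e3 e4 hBD
  have hνD' : ν D' = -ν B' := hstep B' hB' D' hD' _ s1' s2' hs1' hs2' e3' e4' hBD'
  by_cases hBB' : B = B'
  · left
    refine ⟨hBB', key2 D hD D' hD' ?_⟩
    rw [hνD, hνD', hBB']
  · right
    have hνB' : ν B' = -ν B := hstep B hB B' hB' _ s1 s1' hs1 hs1' e3 e3' hBB'
    constructor
    · exact key2 B hB D' hD' (by rw [hνD', hνB', neg_neg])
    · exact key2 D hD B' hB' (by rw [hνD, hνB'])
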